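/- arXiv:1410.3144 — 4 statements merged into one kernel-verified Lean document; each statement's English description precedes it below -/
import Mathlib

section
/- Let M be a dense C-minimal C-structure such that bn(a) ≥ ℵ₀ for every a ∈ T and every branch Br(α) is densely ordered. Let A ⊆ T be a definable antichain. Then the set A₀ := {a ∈ A : a has an immediate predecessor in cl_inf(A)} is finite. -/
namespace CMinPaper

open FirstOrder Language Structure Set

universe u v w

/-! ### The language with a single ternary relation symbol `C` -/

/-- The first-order language whose only symbol is one ternary relation symbol. -/
def cLang : FirstOrder.Language :=
  { Functions := fun _ => Empty
    Relations := fun n => PLift (n = 3) }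

/-- The `cLang`-structure on a set determined by a ternary relation. -/
def cStructure {N : Type w} (R : N → N → N → Prop) : cLang.Structure N where
  funMap := fun f _ => f.elim
  RelMap := fun {n} r v =>
    match n, r, v with
    | _, ⟨rfl⟩, v => R (v 0) (v 1) (v 2)

/-! ### C-sets -/

/-- The axioms (C1)-(C4) of a `C`-set. -/
structure IsCSet {M : Type u} (C : M → M → M → Prop) : Prop where
  c1 : ∀ x y z, C x y z → C x z y
  c2 : ∀ x y z, C x y z → ¬ C y x z
  c3 : ∀ x y z w, C x y z → C w y z ∨ C x w z
  c4 : ∀ x y, x ≠ y → C x y y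

/-- A dense `C`-set: a `C`-set with at least two elements satisfying axiom (D). -/
structure IsDenseCSet {M : Type u} (C : M → M → M → Prop) extends IsCSet C : Prop where
  nontrivial : ∃ x y : M, x ≠ y
  denseAx : ∀ x y : M, x ≠ y → ∃ z, z ≠ y ∧ C x y z

variable {M : Type u}

/-! ### The canonical tree -/

/-- The set `Λ(α,β) = {x | ¬ C(x,α,β)}`. -/
def lamSet (C : M → M → M → Prop) (α β : M) : Set M := {x : M | ¬ C x α β}

/-- The canonical tree `T(M)` of a `C`-set: the collection of all sets `Λ(α,β)`,
ordered by reverse inclusion. -/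
def Node (C : M → M → M → Prop) : Type u := {s : Set M // ∃ α β : M, s = lamSet C α β}

instance {C : M → M → M → Prop} : PartialOrder (Node C) where
  le a b := b.1 ⊆ a.1
  le_refl a := subset_rfl
  le_trans a b c h1 h2 := Set.Subset.trans h2 h1
  le_antisymm a b h1 h2 := Subtype.ext (Set.Subset.antisymm h2 h1)

/-- The node `inf(α,β) = Λ(α,β)` of the canonical tree, coded by the pair `(α,β)`. -/
def node (C : M → M → M → Prop) (α β : M) : Node C := ⟨lamSet C α β, α, β, rfl⟩

/-- The leaf `Λ(α,α) = {α}` of the canonical tree corresponding to `α ∈ M`. -/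
def leafN (C : M → M → M → Prop) (α : M) : Node C := node C α α

/-- A node of the canonical tree is a leaf when it is a singleton. The set `T` of the
paper is the set of nodes which are not leaves. -/
def IsLeaf (C : M → M → M → Prop) (a : Node C) : Prop := ∃ α : M, a.1 = {α}

/-- The branch `Br(α) = {a ∈ T(M) : a ≤ α}` of a point `α ∈ M`. -/
def Br (C : M → M → M → Prop) (α : M) : Set (Node C) := {a : Node C | a ≤ leafN C α}

/-- `IsInfN C a b m` says that `m` is the infimum of the nodes `a` and `b` in `T(M)`. -/
def IsInfN (C : M → M → M → Prop) (a b m : Node C) : Prop :=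
  m ≤ a ∧ m ≤ b ∧ ∀ d : Node C, d ≤ a → d ≤ b → d ≤ m

/-! ### Cones, 0-level sets, intervals, n-level sets -/

/-- The cone `Γ_a(α) = {β ∈ M : a < inf(α,β)}` of `α` at `a`, as a subset of `M`. -/
def coneSet (C : M → M → M → Prop) (a : Node C) (α : M) : Set M :=
  {β : M | a < node C α β}

/-- `s` is a cone at the node `a`. -/
def IsConeAt (C : M → M → M → Prop) (a : Node C) (s : Set M) : Prop :=
  ∃ α : M, a < leafN C α ∧ s = coneSet C a α

/-- `s` is a cone (including `M` itself, the cone at `-∞`). -/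
def IsCone (C : M → M → M → Prop) (s : Set M) : Prop :=
  s = Set.univ ∨ ∃ a : Node C, IsConeAt C a s

/-- The 0-level set `Λ_a`, viewed as a subset of `M`. -/
def lamM (C : M → M → M → Prop) (a : Node C) : Set M := {β : M | a ≤ leafN C β}

/-- `Λ_a(α)`: the 0-level set at `a` with the cone of `α` at `a` removed, in `M`. -/
def lamMinus (C : M → M → M → Prop) (a : Node C) (α : M) : Set M :=
  lamM C a \ coneSet C a α

/-- The cone `Γ_a(b)` of a node `b` at `a`, as a set of leaves:
`{β ∈ M : a < inf(b, β)}`. -/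
def coneSetN (C : M → M → M → Prop) (a b : Node C) : Set M :=
  {β : M | ∃ m : Node C, IsInfN C b (leafN C β) m ∧ a < m}

/-- The interval `(a,b) = Γ_a(b) ∖ Λ_b` in `M`, where `a ∈ T(M) ∪ {-∞}`
(`a = none` is `-∞`). -/
def intervalM (C : M → M → M → Prop) (a : Option (Node C)) (b : Node C) : Set M :=
  (match a with
    | none => Set.univ
    | some a' => coneSetN C a' b) \ lamM C b

/-- An `n`-level set at `a`: `Λ_a` with `n` pairwise distinct cones at `a` removed. -/
def IsNLevelSet (C : M → M → M → Prop) (n : ℕ) (s : Set M) : Prop :=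
  ∃ (a : Node C) (γ : Fin n → Set M), Function.Injective γ ∧
    (∀ i, IsConeAt C a (γ i)) ∧ s = lamM C a \ ⋃ i, γ i

/-! ### 1-cells of `M` -/

/-- The possible types of pieces of a 1-cell. -/
inductive PieceType where
  | point : PieceType
  | cone : PieceType
  | interval : PieceType
  | level : ℕ → PieceType

/-- `s` is a piece of the given type. -/
def IsPiece (C : M → M → M → Prop) : PieceType → Set M → Prop
  | PieceType.point, s => ∃ α : M, s = {α}
  | PieceType.cone, s => IsCone C s
  | PieceType.interval, s => (∃ b : Node C, s = intervalM C none b) ∨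
      (∃ a b : Node C, a < b ∧ s = intervalM C (some a) b)
  | PieceType.level n, s => IsNLevelSet C n s

/-- A 1-cell: a definable subset of `M` which is a finite union of pieces of one single
type among singletons, cones, intervals and `n`-level sets. Here `defin` is the ambient
notion of definable subset of `M`. -/
def IsCell1 (C : M → M → M → Prop) (defin : Set M → Prop) (s : Set M) : Prop :=
  defin s ∧ ∃ (t : PieceType) (k : ℕ) (p : Fin k → Set M),
    (∀ i, IsPiece C t (p i)) ∧ s = ⋃ i, p i

/-! ### Ambient hypotheses on the canonical tree -/

/-- `bn(a) ≥ ℵ₀` for every `a ∈ T`: every non-leaf node has infinitely many cones. -/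
def BranchesInfinite (C : M → M → M → Prop) : Prop :=
  ∀ a : Node C, ¬ IsLeaf C a → {s : Set M | IsConeAt C a s}.Infinite

/-- Every branch `Br(α)` is densely ordered. -/
def BranchesDense (C : M → M → M → Prop) : Prop :=
  ∀ (α : M) (a b : Node C), a ≤ leafN C α → b ≤ leafN C α → a < b →
    ∃ d : Node C, a < d ∧ d < b

/-- A partial function `f` with domain `D` is locally constant when every point of `D` has
a cone around it on which `f` is constant. -/
def LocConstOn (C : M → M → M → Prop) {β : Type*} (D : Set M) (f : M → β) : Prop :=
  ∀ α ∈ D, ∃ Γ : Set M, IsCone C Γ ∧ α ∈ Γ ∧ ∀ x ∈ Γ ∩ D, f x = f α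

/-! ### Definability -/

section Definability

variable (L : FirstOrder.Language.{v, w}) [L.Structure M]

/-- A subset of `M` definable with parameters. -/
def DefinableM (s : Set M) : Prop := Set.Definable₁ (Set.univ : Set M) L s

/-- A subset of the canonical tree is definable when the corresponding set of codes
(a node `inf(β,γ)` being coded by the pair `(β,γ)`) is definable with parameters. -/
def DefinableNodeSet (C : M → M → M → Prop) (S : Set (Node C)) : Prop :=
  Set.Definable (Set.univ : Set M) L {p : Fin 2 → M | node C (p 0) (p 1) ∈ S}

/-- A partial function `f : M → T(M)` with domain `D` is definable when its graph,
with nodes coded by pairs, is definable with parameters. -/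
def DefinablePFunTree (C : M → M → M → Prop) (D : Set M) (f : M → Node C) : Prop :=
  Set.Definable (Set.univ : Set M) L
    {p : Fin 3 → M | p 0 ∈ D ∧ f (p 0) = node C (p 1) (p 2)}

/-- A function `g` defined on a subset `A` of the canonical tree, with values in the
canonical tree, is definable when its graph (on codes) is definable with parameters. -/
def DefinableNodeFun (C : M → M → M → Prop) (A : Set (Node C)) (g : Node C → Node C) :
    Prop :=
  Set.Definable (Set.univ : Set M) L
    {p : Fin 4 → M | node C (p 0) (p 1) ∈ A ∧ g (node C (p 0) (p 1)) = node C (p 2) (p 3)}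

end Definability

/-- `s ⊆ N` is definable by a quantifier-free formula with parameters in the language
containing only the ternary relation interpreted as `R`. -/
def QFCDefinable {N : Type w} (R : N → N → N → Prop) (s : Set N) : Prop :=
  ∃ (k : ℕ) (φ : cLang.BoundedFormula (Fin k) 1) (xs : Fin k → N),
    φ.IsQF ∧ s = {x : N | @BoundedFormula.Realize cLang N (cStructure R) _ _ φ xs (fun _ => x)}

/-- `M` is `C`-minimal (with `C` the interpretation of the relation symbol `c`):
in every elementarily equivalent structure, every subset definable with parameters is
quantifier-free definable using only the relation `C`. -/
def CMinimal (L : FirstOrder.Language.{v, w}) (M : Type u) [L.Structure M]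
    (c : L.Relations 3) : Prop :=
  ∀ (N : Type u) [L.Structure N], (M ≅[L] N) →
    ∀ s : Set N, Set.Definable₁ (Set.univ : Set N) L s →
      QFCDefinable (fun x y z : N => RelMap c ![x, y, z]) s

/-! ### The induced C-relation on an antichain, infima closure -/

/-- The relation `C_A(x,y,z) ↔ inf(y,z) > inf(x,y)` induced on (an antichain of) the
canonical tree. -/
def CInd (C : M → M → M → Prop) (x y z : Node C) : Prop :=
  ∃ m₁ m₂ : Node C, IsInfN C y z m₁ ∧ IsInfN C x y m₂ ∧ m₂ < m₁

/-- The induced `C`-relation, as a ternary relation on an antichain `A`. -/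
def CIndRel (C : M → M → M → Prop) (A : Set (Node C)) : ↥A → ↥A → ↥A → Prop :=
  fun x y z => CInd C x.1 y.1 z.1

/-- The closure `cl_inf(A)` of a subset of the canonical tree under binary infima. -/
inductive InfClosure (C : M → M → M → Prop) (A : Set (Node C)) : Node C → Prop
  | base {a : Node C} : a ∈ A → InfClosure C A a
  | inf {a b m : Node C} : InfClosure C A a → InfClosure C A b → IsInfN C a b m →
      InfClosure C A m

/-- A cone of the `C`-set `(A, C_A)` induced on an antichain `A` (including `A` itself,
the cone at `-∞`): `Γ_{inf(a,b)}(a) = {x ∈ A : C_A(b,x,a)}`. -/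
def ConeInAntichain (C : M → M → M → Prop) (A : Set (Node C)) (S : Set (Node C)) : Prop :=
  S = A ∨ ∃ a ∈ A, ∃ b ∈ A, a ≠ b ∧ S = {x ∈ A | CInd C b x a}

/-! ### Incomparable chains and t-functions -/

/-- A finite set `𝔠` of definable chains of `T` is a set of *incomparable chains* if
(a) elements of distinct chains are incomparable, (b) the antichain
`A = {inf(lp C₀, lp C₁)}` of infima of left endpoints is an antichain on which the
automorphism group of the induced `C`-set acts transitively, and (c) each `a ∈ A` lies
strictly below elements of exactly `k` chains of `𝔠`. -/
def IsIncompChainSet (C : M → M → M → Prop) (defin : Set (Node C) → Prop)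
    (𝔠 : Set (Set (Node C))) : Prop :=
  𝔠.Finite ∧
  (∀ B ∈ 𝔠, IsChain (· ≤ ·) B ∧ defin B) ∧
  (∀ B₁ ∈ 𝔠, ∀ B₂ ∈ 𝔠, B₁ ≠ B₂ → ∀ x ∈ B₁, ∀ y ∈ B₂, ¬ x ≤ y ∧ ¬ y ≤ x) ∧
  ∃ lp : Set (Node C) → WithBot (Node C),
    (∀ B ∈ 𝔠, IsGLB ((fun a : Node C => (a : WithBot (Node C))) '' B) (lp B)) ∧
    ∀ A : Set (Node C),
      (∀ x : Node C, x ∈ A ↔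
        ∃ B₁ ∈ 𝔠, ∃ B₂ ∈ 𝔠, B₁ ≠ B₂ ∧ IsGLB {lp B₁, lp B₂} (x : WithBot (Node C))) →
      IsAntichain (· ≤ ·) A ∧
      (∀ (a : Node C) (ha : a ∈ A) (b : Node C) (hb : b ∈ A), ∃ g : ↥A ≃ ↥A,
        (∀ x y z : ↥A, CIndRel C A x y z ↔ CIndRel C A (g x) (g y) (g z)) ∧
        g ⟨a, ha⟩ = ⟨b, hb⟩) ∧
      ∃ k : ℕ, ∀ a ∈ A, {B ∈ 𝔠 | ∃ x ∈ B, a < x}.ncard = k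

/-- A definable function on a definable antichain `A ⊆ T` is a *t-function* when its
image is an antichain or the union of a finite set of incomparable chains. -/
def IsTFunction (C : M → M → M → Prop) (defin : Set (Node C) → Prop)
    (A : Set (Node C)) (f : Node C → Node C) : Prop :=
  IsAntichain (· ≤ ·) (f '' A) ∨
    ∃ 𝔠 : Set (Set (Node C)), IsIncompChainSet C defin 𝔠 ∧ f '' A = ⋃₀ 𝔠

/-! ### 1-cells of the canonical tree -/

/-- A 1-cell of `T`: the image, or the set of points strictly between the values of,
two definable t-functions `g < f` on a definable antichain `A ⊆ T`. -/
def IsCellT (C : M → M → M → Prop) (definN : Set (Node C) → Prop)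
    (definFun : Set (Node C) → (Node C → Node C) → Prop) (X : Set (Node C)) : Prop :=
  ∃ (A : Set (Node C)) (f g : Node C → Node C),
    definN A ∧ IsAntichain (· ≤ ·) A ∧ (∀ a ∈ A, ¬ IsLeaf C a) ∧
    definFun A f ∧ definFun A g ∧
    IsTFunction C definN A f ∧ IsTFunction C definN A g ∧
    (∀ a ∈ A, ¬ IsLeaf C (f a)) ∧ (∀ a ∈ A, ¬ IsLeaf C (g a)) ∧
    (∀ a ∈ A, g a < f a) ∧
    (X = f '' A ∨ X = {t : Node C | ∃ a ∈ A, g a < t ∧ t < f a})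

/-! ### C-isomorphisms and algebraic closure -/

/-- A function from a subset `S` of `M` to the canonical tree is a `C`-isomorphism on `S`
if it is injective, has antichain image, and transports the relation `C` to the induced
relation `C_A` on the image antichain. -/
def IsCIsoOn (C : M → M → M → Prop) (S : Set M) (f : M → Node C) : Prop :=
  Set.InjOn f S ∧ IsAntichain (· ≤ ·) (f '' S) ∧
    ∀ x ∈ S, ∀ y ∈ S, ∀ z ∈ S, (C x y z ↔ CInd C (f x) (f y) (f z))

/-- `f` is a local `C`-isomorphism on `D`. -/
def LocalCIsoOn (C : M → M → M → Prop) (D : Set M) (f : M → Node C) : Prop :=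
  ∀ α ∈ D, ∃ Γ : Set M, IsCone C Γ ∧ α ∈ Γ ∧ IsCIsoOn C (Γ ∩ D) f

/-- The model-theoretic algebraic closure of `A`: the union of all finite `A`-definable
subsets. -/
def aclSet (L : FirstOrder.Language.{v, w}) (N : Type u) [L.Structure N] (A : Set N) :
    Set N :=
  ⋃₀ {s : Set N | s.Finite ∧ Set.Definable₁ A L s}

/-! ### Intervals of a chain of the canonical tree -/

/-- An interval of a chain `B ⊆ T(M)`: a nonempty convex subset of `B`, open in the
order topology of `B`, which is not a single point. -/
def IsIntervalIn (C : M → M → M → Prop) (B I : Set (Node C)) : Prop :=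
  I ⊆ B ∧ I.Nonempty ∧ (¬ ∃ x, I = {x}) ∧
  (∀ x ∈ I, ∀ y ∈ I, ∀ z ∈ B, x ≤ z → z ≤ y → z ∈ I) ∧
  (∀ x ∈ I,
    ((∀ y ∈ B, ¬ y < x) ∨ ∃ a ∈ B, a < x ∧ ∀ y ∈ B, a < y → y ≤ x → y ∈ I) ∧
    ((∀ y ∈ B, ¬ x < y) ∨ ∃ b ∈ B, x < b ∧ ∀ y ∈ B, x ≤ y → y < b → y ∈ I))

/-- The family of subsets of `T` defined by a formula `φ(t, y)` (given by its set `Φ` of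
codes) at the parameter `α`. -/
def nodeFam (C : M → M → M → Prop) {k : ℕ} (Φ : Set (Fin (2 + k) → M))
    (α : Fin k → M) : Set (Node C) :=
  {x : Node C | ¬ IsLeaf C x ∧ ∃ β γ : M, x = node C β γ ∧ Fin.append ![β, γ] α ∈ Φ}

/-! ### Valued fields -/

/-- `v` is a surjective nontrivial valuation on `K` with value group `Γ`
(written additively, with `v 0 = ⊤`). -/
structure IsValuationOn (K : Type u) [Field K] (Γ : Type v)
    [AddCommGroup Γ] [LinearOrder Γ] [IsOrderedAddMonoid Γ] (v : K → WithTop Γ) : Prop where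
  top_iff : ∀ x : K, v x = ⊤ ↔ x = 0
  map_mul : ∀ x y : K, v (x * y) = v x + v y
  add_min : ∀ x y : K, min (v x) (v y) ≤ v (x + y)
  surj : ∀ g : Γ, ∃ x : K, v x = (g : WithTop Γ)
  nontriv : ∃ x : K, x ≠ 0 ∧ v x ≠ (0 : WithTop Γ)

/-- The canonical `C`-relation of a valued field: `C(x,y,z)` iff `v(y−z) > v(x−z)`. -/
def vC {K : Type u} [Field K] {Γ : Type v} [AddCommGroup Γ] [LinearOrder Γ] [IsOrderedAddMonoid Γ]
    (v : K → WithTop Γ) : K → K → K → Prop :=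
  fun x y z => v (x - z) < v (y - z)

/-- The coset relation `v(x−y) > 0` on the valuation ring, defining the residue field. -/
def resRel {K : Type u} [Field K] {Γ : Type v} [AddCommGroup Γ] [LinearOrder Γ] [IsOrderedAddMonoid Γ]
    (v : K → WithTop Γ) :
    {x : K // (0 : WithTop Γ) ≤ v x} → {x : K // (0 : WithTop Γ) ≤ v x} → Prop :=
  fun a b => (0 : WithTop Γ) < v (a.1 - b.1)

/-- The residue field `K/v`: the valuation ring modulo the coset relation `v(x−y) > 0`. -/
def ResField {K : Type u} [Field K] {Γ : Type v} [AddCommGroup Γ] [LinearOrder Γ] [IsOrderedAddMonoid Γ]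
    (v : K → WithTop Γ) : Type u :=
  Quot (resRel v)

/-- The residue `x/v` of `x ∈ K`: its class in `K/v` when `x` lies in the valuation
ring (and the class of `0` otherwise, as a junk value). -/
noncomputable def resOf {K : Type u} [Field K] {Γ : Type v}
    [AddCommGroup Γ] [LinearOrder Γ] [IsOrderedAddMonoid Γ] {v : K → WithTop Γ}
    (hv : IsValuationOn K Γ v) (x : K) : ResField v := by
  classical
  exact if hx : (0 : WithTop Γ) ≤ v x then Quot.mk _ ⟨x, hx⟩
    else Quot.mk _ ⟨0, by rw [(hv.top_iff 0).mpr rfl]; exact le_top⟩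

section Statement5Aux

theorem csetNotXXY {C : M → M → M → Prop} (h : IsCSet C) (x y : M) : ¬ C x x y :=
  fun hc => h.c2 _ _ _ hc hc

theorem csetNotXYX {C : M → M → M → Prop} (h : IsCSet C) (x y : M) : ¬ C x y x :=
  fun hc => csetNotXXY h x y (h.c1 _ _ _ hc)

theorem csetC3' {C : M → M → M → Prop} (h : IsCSet C) {x y z w : M}
    (hc : C x y z) (hw : ¬ C w y z) : C x w z :=
  (h.c3 x y z w hc).resolve_left hw

theorem memLamLeft {C : M → M → M → Prop} (h : IsCSet C) (α β : M) :
    α ∈ lamSet C α β := csetNotXXY h α β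

theorem memLamRight {C : M → M → M → Prop} (h : IsCSet C) (α β : M) :
    β ∈ lamSet C α β := csetNotXYX h β α

theorem lamSelf {C : M → M → M → Prop} (h : IsCSet C) (α : M) :
    lamSet C α α = {α} := by
  ext x
  constructor
  · intro hx
    by_contra hne
    exact hx (h.c4 x α hne)
  · intro hx
    rw [Set.mem_singleton_iff] at hx
    subst hx
    exact csetNotXXY h _ _

theorem lamSubset {C : M → M → M → Prop} (h : IsCSet C) {α β x y : M}
    (hx : x ∈ lamSet C α β) (hy : y ∈ lamSet C α β) :
    lamSet C x y ⊆ lamSet C α β := by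
  intro u hu hcon
  have h1 : C u x β := csetC3' h hcon hx
  have h2 : C u β x := h.c1 _ _ _ h1
  by_cases hyx : C y β x
  · have hxy : ¬ C x β y := fun hxy => h.c2 _ _ _ (h.c1 _ _ _ hxy) (h.c1 _ _ _ hyx)
    have h3 : C u y β := csetC3' h hcon hy
    exact hu (csetC3' h (h.c1 _ _ _ h3) hxy)
  · exact hu (h.c1 _ _ _ (csetC3' h h2 hyx))

theorem nestedCenter {C : M → M → M → Prop} (h : IsCSet C) (α y y' : M) :
    lamSet C α y ⊆ lamSet C α y' ∨ lamSet C α y' ⊆ lamSet C α y := by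
  by_cases hy : C y α y'
  · by_cases hy' : C y' α y
    · exact absurd (h.c1 _ _ _ hy') (h.c2 _ _ _ (h.c1 _ _ _ hy))
    · exact Or.inr (lamSubset h (memLamLeft h α y) hy')
  · exact Or.inl (lamSubset h (memLamLeft h α y') hy)

theorem lamRecenter {C : M → M → M → Prop} (h : IsCSet C) {α β u : M}
    (hu : u ∈ lamSet C α β) :
    lamSet C α β = lamSet C u α ∨ lamSet C α β = lamSet C u β := by
  by_cases hγ : C β u α
  · right
    have hα : ¬ C α u β := fun hα => h.c2 _ _ _ (h.c1 _ _ _ hα) (h.c1 _ _ _ hγ)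
    exact Set.Subset.antisymm (lamSubset h hα (memLamRight h u β))
      (lamSubset h hu (memLamRight h α β))
  · left
    exact Set.Subset.antisymm (lamSubset h (memLamRight h u α) hγ)
      (lamSubset h hu (memLamLeft h α β))

theorem lamNested {C : M → M → M → Prop} (h : IsCSet C) {α β γ δ u : M}
    (h1 : u ∈ lamSet C α β) (h2 : u ∈ lamSet C γ δ) :
    lamSet C α β ⊆ lamSet C γ δ ∨ lamSet C γ δ ⊆ lamSet C α β := by
  rcases lamRecenter h h1 with e1 | e1 <;> rcases lamRecenter h h2 with e2 | e2 <;>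
    rw [e1, e2] <;> exact nestedCenter h u _ _

theorem nodeLe {C : M → M → M → Prop} {a b : Node C} : a ≤ b ↔ b.1 ⊆ a.1 := Iff.rfl

theorem nodeLt {C : M → M → M → Prop} {a b : Node C} : a < b ↔ b.1 ⊂ a.1 := by
  rw [lt_iff_le_not_ge, Set.ssubset_def]
  exact and_congr nodeLe (not_congr nodeLe)

theorem nestedNode {C : M → M → M → Prop} (h : IsCSet C) {a b : Node C} {u : M}
    (ha : u ∈ a.1) (hb : u ∈ b.1) : a.1 ⊆ b.1 ∨ b.1 ⊆ a.1 := by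
  obtain ⟨α, β, hab⟩ := a.2
  obtain ⟨γ, δ, hcd⟩ := b.2
  rw [hab] at ha ⊢
  rw [hcd] at hb ⊢
  exact lamNested h ha hb

theorem lamSubsetNode {C : M → M → M → Prop} (h : IsCSet C) {a : Node C} {x y : M}
    (hx : x ∈ a.1) (hy : y ∈ a.1) : lamSet C x y ⊆ a.1 := by
  obtain ⟨α, β, hab⟩ := a.2
  rw [hab] at hx hy ⊢
  exact lamSubset h hx hy

theorem existsInf {C : M → M → M → Prop} (h : IsCSet C) (n₁ n₂ : Node C) :
    ∃ m : Node C, IsInfN C n₁ n₂ m := by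
  by_cases h12 : n₁.1 ⊆ n₂.1
  · exact ⟨n₂, h12, le_rfl, fun d _ hd2 => hd2⟩
  · by_cases h21 : n₂.1 ⊆ n₁.1
    · exact ⟨n₁, le_rfl, h21, fun d hd1 _ => hd1⟩
    · obtain ⟨u, hu1, hu2⟩ := Set.not_subset.mp h12
      obtain ⟨w, hw2, hw1⟩ := Set.not_subset.mp h21
      refine ⟨node C u w, ?_, ?_, fun d hd1 hd2 => ?_⟩
      · rcases nestedNode h (b := node C u w) hu1 (memLamLeft h u w) with hs | hs
        · exact hs
        · exact absurd (hs (memLamRight h u w)) hw1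
      · rcases nestedNode h (b := node C u w) hw2 (memLamRight h u w) with hs | hs
        · exact hs
        · exact absurd (hs (memLamLeft h u w)) hu2
      · exact lamSubsetNode h (hd1 hu1) (hd2 hw2)


theorem relAtomDir {k : ℕ} {C : M → M → M → Prop} (h : IsCSet C) {Γ : Set M}
    (hsep : ∀ p ∉ Γ, ∀ w ∈ Γ, ∀ w' ∈ Γ, C p w w')
    {z z' : M} (hz : z ∈ Γ) (hz' : z' ∈ Γ)
    {xs : Fin k → M} (hxs : ∀ i, xs i ∉ Γ) (i₀ i₁ i₂ : Fin k ⊕ Fin 1)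
    (hr : C (Sum.elim xs (fun _ : Fin 1 => z) i₀) (Sum.elim xs (fun _ : Fin 1 => z) i₁)
      (Sum.elim xs (fun _ : Fin 1 => z) i₂)) :
    C (Sum.elim xs (fun _ : Fin 1 => z') i₀) (Sum.elim xs (fun _ : Fin 1 => z') i₁)
      (Sum.elim xs (fun _ : Fin 1 => z') i₂) := by
  rcases i₀ with j₀ | j₀ <;> rcases i₁ with j₁ | j₁ <;> rcases i₂ with j₂ | j₂ <;>
    simp only [Sum.elim_inl, Sum.elim_inr] at hr ⊢
  · exact hr
  · exact h.c1 _ _ _ (csetC3' h (h.c1 _ _ _ hr)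
      (fun hc => h.c2 _ _ _ (h.c1 _ _ _ (hsep _ (hxs j₁) _ hz _ hz')) (h.c1 _ _ _ hc)))
  · exact csetC3' h hr
      (fun hc => h.c2 _ _ _ (h.c1 _ _ _ (hsep _ (hxs j₂) _ hz _ hz')) (h.c1 _ _ _ hc))
  · exact h.c4 _ _ (fun e => hxs j₀ (Set.mem_of_eq_of_mem e hz'))
  · rcases h.c3 _ (xs j₁) (xs j₂) z' hr with h' | h'
    · exact h'
    · exact absurd (hsep _ (hxs j₂) _ hz _ hz') (h.c2 _ _ _ (h.c1 _ _ _ h'))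
  · exact absurd hr (csetNotXYX h _ _)
  · exact absurd hr (csetNotXXY h _ _)
  · exact absurd hr (csetNotXXY h _ _)

theorem cTermVar {γ : Type*} (t : cLang.Term γ) : ∃ i, t = Term.var i := by
  cases t with
  | var i => exact ⟨i, rfl⟩
  | func f _ => exact Empty.elim f

theorem qfInvariant {k : ℕ} {C : M → M → M → Prop} (h : IsCSet C) {Γ : Set M}
    (hsep : ∀ p ∉ Γ, ∀ w ∈ Γ, ∀ w' ∈ Γ, C p w w')
    {z z' : M} (hz : z ∈ Γ) (hz' : z' ∈ Γ)
    (xs : Fin k → M) (hxs : ∀ i, xs i ∉ Γ) :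
    ∀ (φ : cLang.BoundedFormula (Fin k) 1), φ.IsQF →
      (@BoundedFormula.Realize cLang M (cStructure C) _ _ φ xs (fun _ => z) ↔
        @BoundedFormula.Realize cLang M (cStructure C) _ _ φ xs (fun _ => z')) := by
  letI : cLang.Structure M := cStructure C
  intro φ hqf
  induction hqf with
  | falsum => exact Iff.rfl
  | of_isAtomic hatom =>
    cases hatom with
    | equal t₁ t₂ =>
      obtain ⟨i₁, rfl⟩ := cTermVar t₁
      obtain ⟨i₂, rfl⟩ := cTermVar t₂
      show Sum.elim xs (fun _ : Fin 1 => z) i₁ = Sum.elim xs (fun _ : Fin 1 => z) i₂ ↔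
        Sum.elim xs (fun _ : Fin 1 => z') i₁ = Sum.elim xs (fun _ : Fin 1 => z') i₂
      rcases i₁ with j₁ | j₁ <;> rcases i₂ with j₂ | j₂
      · exact Iff.rfl
      · exact iff_of_false (fun e => hxs j₁ (Set.mem_of_eq_of_mem e hz))
          (fun e => hxs j₁ (Set.mem_of_eq_of_mem e hz'))
      · exact iff_of_false (fun e => hxs j₂ (Set.mem_of_eq_of_mem (Eq.symm e) hz))
          (fun e => hxs j₂ (Set.mem_of_eq_of_mem (Eq.symm e) hz'))
      · exact iff_of_true rfl rfl
    | rel R' ts =>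
      obtain ⟨hl⟩ := R'
      subst hl
      obtain ⟨i₀, h₀⟩ := cTermVar (ts 0)
      obtain ⟨i₁, h₁⟩ := cTermVar (ts 1)
      obtain ⟨i₂, h₂⟩ := cTermVar (ts 2)
      show C ((ts 0).realize (Sum.elim xs fun _ : Fin 1 => z))
          ((ts 1).realize (Sum.elim xs fun _ : Fin 1 => z))
          ((ts 2).realize (Sum.elim xs fun _ : Fin 1 => z)) ↔
        C ((ts 0).realize (Sum.elim xs fun _ : Fin 1 => z'))
          ((ts 1).realize (Sum.elim xs fun _ : Fin 1 => z'))
          ((ts 2).realize (Sum.elim xs fun _ : Fin 1 => z'))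
      rw [h₀, h₁, h₂]
      constructor
      · exact fun hr => relAtomDir h hsep hz hz' hxs i₀ i₁ i₂ hr
      · exact fun hr => relAtomDir h hsep hz' hz hxs i₀ i₁ i₂ hr
  | imp h1 h2 ih1 ih2 => exact imp_congr ih1 ih2



theorem leafVal {C : M → M → M → Prop} (h : IsCSet C) (α : M) : (leafN C α).1 = {α} :=
  lamSelf h α

theorem dDefinable {L : FirstOrder.Language.{v, w}} [L.Structure M]
    (c : L.Relations 3) (C : M → M → M → Prop)
    (hC : ∀ x y z : M, C x y z ↔ RelMap c ![x, y, z])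
    {A : Set (Node C)} (hAdef : DefinableNodeSet L C A) :
    Set.Definable₁ (Set.univ : Set M) L
      {x : M | ∃ β γ : M, node C β γ ∈ A ∧ x ∈ lamSet C β γ} := by
  classical
  have hCdef : Set.Definable (Set.univ : Set M) L {p : Fin 3 → M | C (p 0) (p 1) (p 2)} := by
    refine Set.Definable.mono ?_ (Set.empty_subset _)
    rw [Set.empty_definable_iff]
    refine ⟨Relations.formula c ![Term.var 0, Term.var 1, Term.var 2], ?_⟩
    ext p
    rw [Set.mem_setOf_eq, Set.mem_setOf_eq, Formula.realize_rel, hC]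
    refine iff_of_eq (congrArg (RelMap c) ?_)
    funext i
    fin_cases i <;> rfl
  have h1 : Set.Definable (Set.univ : Set M) L {p : Fin 3 → M | node C (p 1) (p 2) ∈ A} := by
    have h0 := Set.Definable.preimage_comp (![1, 2] : Fin 2 → Fin 3) hAdef
    have he : (fun g : Fin 3 → M => g ∘ ![1, 2]) ⁻¹'
        {p : Fin 2 → M | node C (p 0) (p 1) ∈ A} =
        {p : Fin 3 → M | node C (p 1) (p 2) ∈ A} := by
      ext p
      simp only [Set.mem_preimage, Set.mem_setOf_eq, Function.comp_apply,
        Matrix.cons_val_zero, Matrix.cons_val_one, Matrix.head_cons]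
    rw [he] at h0
    exact h0
  have h2 := h1.inter hCdef.compl
  have h3 := Set.Definable.image_comp h2 (![0] : Fin 1 → Fin 3)
  have he2 : ((fun g : Fin 3 → M => g ∘ ![0]) ''
      ({p : Fin 3 → M | node C (p 1) (p 2) ∈ A} ∩ {p : Fin 3 → M | C (p 0) (p 1) (p 2)}ᶜ))
      = {x : Fin 1 → M | x 0 ∈ {y : M | ∃ β γ : M, node C β γ ∈ A ∧ y ∈ lamSet C β γ}} := by
    ext g
    constructor
    · rintro ⟨p, ⟨hpA, hpC⟩, rfl⟩
      exact ⟨p 1, p 2, hpA, hpC⟩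
    · rintro ⟨β, γ, hA, hx⟩
      refine ⟨![g 0, β, γ], ⟨?_, ?_⟩, ?_⟩
      · exact hA
      · exact hx
      · funext i
        fin_cases i
        rfl
  unfold Set.Definable₁
  exact he2 ▸ h3

end Statement5Aux

/-- For a definable antichain `A ⊆ T`, the set of elements of `A`
having an immediate predecessor in `cl_inf(A)` is finite. -/
theorem statement5 {M : Type u} {L : FirstOrder.Language.{v, w}} [L.Structure M]
    (c : L.Relations 3) (C : M → M → M → Prop)
    (hC : ∀ x y z : M, C x y z ↔ RelMap c ![x, y, z])
    (hdense : IsDenseCSet C) (hmin : CMinimal L M c)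
    (hbn : BranchesInfinite C) (hbd : BranchesDense C)
    (A : Set (Node C)) (hAT : ∀ a ∈ A, ¬ IsLeaf C a)
    (hanti : IsAntichain (· ≤ ·) A)
    (hAdef : DefinableNodeSet L C A) :
    {a ∈ A | ∃ b : Node C, InfClosure C A b ∧ b < a ∧
      ¬ ∃ d : Node C, InfClosure C A d ∧ b < d ∧ d < a}.Finite := by
  classical
  have hCs : IsCSet C := hdense.toIsCSet
  have hRC : (fun x y z : M => RelMap c ![x, y, z]) = C := by
    funext x y z
    exact propext (hC x y z).symm
  have hDdef := dDefinable c C hC hAdef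
  have hQFC := hmin M (elementarilyEquivalent_iff.mpr fun ψ => Iff.rfl) _ hDdef
  rw [hRC] at hQFC
  obtain ⟨k, φ, xs, hqf, hDeq⟩ := hQFC
  have eqA : ∀ {n n' : Node C}, n ∈ A → n' ∈ A → n.1 ⊆ n'.1 → n = n' := by
    intro n n' hn hn' hsub
    by_contra hne
    exact hanti hn' hn (fun e => hne e.symm) hsub
  have bothMem : ∀ {n n' : Node C}, n ∈ A → n' ∈ A → ∀ u : M, u ∈ n.1 → u ∈ n'.1 →
      n = n' := by
    intro n n' hn hn' u hu hu'
    rcases nestedNode hCs hu hu' with hs | hs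
    · exact eqA hn hn' hs
    · exact (eqA hn' hn hs).symm
  have key : ∀ a : Node C, a ∈ A →
      (∃ b : Node C, InfClosure C A b ∧ b < a ∧
        ¬ ∃ d : Node C, InfClosure C A d ∧ b < d ∧ d < a) →
      ∃ (i : Fin k) (α : M) (B : Set M), α ∈ a.1 ∧
        α ∈ {x : M | ∃ β γ : M, node C β γ ∈ A ∧ x ∈ lamSet C β γ} ∧
        lamSet C α (xs i) ⊂ B ∧
        ∀ y : M, lamSet C α y ⊂ B →
          y ∈ {x : M | ∃ β γ : M, node C β γ ∈ A ∧ x ∈ lamSet C β γ} → y ∈ a.1 := by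
    rintro a haA ⟨b, hbcl, hba, hmax⟩
    obtain ⟨β, γ, ha1⟩ := a.2
    have hnodea : node C β γ = a := Subtype.ext ha1.symm
    have hα : β ∈ a.1 := by rw [ha1]; exact memLamLeft hCs β γ
    have hαD : β ∈ {x : M | ∃ β' γ' : M, node C β' γ' ∈ A ∧ x ∈ lamSet C β' γ'} :=
      ⟨β, γ, by rw [hnodea]; exact haA, memLamLeft hCs β γ⟩
    have hab : a.1 ⊂ b.1 := nodeLt.mp hba
    have claim6 : ∀ y : M, lamSet C β y ⊂ b.1 →
        y ∈ {x : M | ∃ β' γ' : M, node C β' γ' ∈ A ∧ x ∈ lamSet C β' γ'} → y ∈ a.1 := by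
      rintro y hyΓ ⟨β', γ', hx'A, hy'⟩
      obtain ⟨m, hm⟩ := existsInf hCs a (node C β' γ')
      have hmcl : InfClosure C A m :=
        InfClosure.inf (InfClosure.base haA) (InfClosure.base hx'A) hm
      have hye : y ∈ lamSet C β y := memLamRight hCs β y
      have hαe : β ∈ lamSet C β y := memLamLeft hCs β y
      rcases lamNested hCs hye hy' with hs | hs
      · have hαB' : β ∈ lamSet C β' γ' := hs hαe
        have heq : a = node C β' γ' := bothMem haA hx'A β hα hαB'
        rw [heq]
        exact hy'
      · rcases nestedNode hCs (b := node C β y) hα hαe with h1 | h1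
        · have hea : node C β y ≤ a := h1
          have hex' : node C β y ≤ node C β' γ' := hs
          have hem : node C β y ≤ m := hm.2.2 _ hea hex'
          have hm_lt : b < m :=
            nodeLt.mpr (ssubset_of_subset_of_ssubset (nodeLe.mp hem) hyΓ)
          rcases lt_or_eq_of_le hm.1 with hlt | heq
          · exact absurd ⟨m, hmcl, hm_lt, hlt⟩ hmax
          · have hax' : (node C β' γ').1 ⊆ a.1 := by
              rw [← heq]
              exact hm.2.1
            have heq2 : node C β' γ' = a := eqA hx'A haA hax'
            rw [← heq2]
            exact hy'
        · exact h1 hye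
    have hsep : ∀ p ∉ {y : M | lamSet C β y ⊂ b.1}, ∀ w ∈ {y : M | lamSet C β y ⊂ b.1},
        ∀ w' ∈ {y : M | lamSet C β y ⊂ b.1}, C p w w' := by
      intro p hp w hw w' hw'
      by_contra hc
      apply hp
      have hc' : p ∈ lamSet C w w' := hc
      have hw2 : lamSet C β w ⊂ b.1 := hw
      have hw'2 : lamSet C β w' ⊂ b.1 := hw'
      rcases nestedCenter hCs β w w' with hww | hww
      · have hwW : w ∈ lamSet C β w' := hww (memLamRight hCs β w)
        have hpW : p ∈ lamSet C β w' := lamSubset hCs hwW (memLamRight hCs β w') hc'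
        exact ssubset_of_subset_of_ssubset
          (lamSubset hCs (memLamLeft hCs β w') hpW) hw'2
      · have hwW : w' ∈ lamSet C β w := hww (memLamRight hCs β w')
        have hpW : p ∈ lamSet C β w := lamSubset hCs (memLamRight hCs β w) hwW hc'
        exact ssubset_of_subset_of_ssubset
          (lamSubset hCs (memLamLeft hCs β w) hpW) hw2
    have hαb : β ∈ b.1 := hab.subset hα
    have hbleaf : b ≤ leafN C β := by
      rw [nodeLe, leafVal hCs]
      exact Set.singleton_subset_iff.mpr hαb
    have haleaf : a ≤ leafN C β := by
      rw [nodeLe, leafVal hCs]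
      exact Set.singleton_subset_iff.mpr hα
    obtain ⟨d, hbd1, hda⟩ := hbd β b a hbleaf haleaf hba
    have had : a.1 ⊂ d.1 := nodeLt.mp hda
    have hdb : d.1 ⊂ b.1 := nodeLt.mp hbd1
    obtain ⟨y₀, hy₀d, hy₀a⟩ := Set.exists_of_ssubset had
    have hy₀Γ : lamSet C β y₀ ⊂ b.1 :=
      ssubset_of_subset_of_ssubset (lamSubsetNode hCs (had.subset hα) hy₀d) hdb
    have hαΓ : lamSet C β β ⊂ b.1 := by
      rw [lamSelf hCs]
      refine (Set.ssubset_iff_of_subset (Set.singleton_subset_iff.mpr hαb)).mpr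
        ⟨y₀, hdb.subset hy₀d, ?_⟩
      intro e
      rw [Set.mem_singleton_iff] at e
      subst e
      exact hy₀a hα
    by_cases hall : ∀ i : Fin k, xs i ∉ {y : M | lamSet C β y ⊂ b.1}
    · exfalso
      have hzmem : β ∈ {y : M | lamSet C β y ⊂ b.1} := hαΓ
      have hz'mem : y₀ ∈ {y : M | lamSet C β y ⊂ b.1} := hy₀Γ
      have hinv := qfInvariant hCs hsep hzmem hz'mem xs hall φ hqf
      have hαR : β ∈ {x : M |
          @BoundedFormula.Realize cLang M (cStructure C) _ _ φ xs fun _ => x} := by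
        rw [← hDeq]
        exact hαD
      have hy₀D : y₀ ∈ {x : M | ∃ β' γ' : M, node C β' γ' ∈ A ∧ x ∈ lamSet C β' γ'} := by
        rw [hDeq]
        exact hinv.mp hαR
      exact hy₀a (claim6 y₀ hy₀Γ hy₀D)
    · push_neg at hall
      obtain ⟨i, hi⟩ := hall
      exact ⟨i, β, b.1, hα, hαD, hi, claim6⟩
  have keyS : ∀ p : ↥{a ∈ A | ∃ b : Node C, InfClosure C A b ∧ b < a ∧
      ¬ ∃ d : Node C, InfClosure C A d ∧ b < d ∧ d < a},
      ∃ (i : Fin k) (α : M) (B : Set M), α ∈ (p : Node C).1 ∧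
        α ∈ {x : M | ∃ β γ : M, node C β γ ∈ A ∧ x ∈ lamSet C β γ} ∧
        lamSet C α (xs i) ⊂ B ∧
        ∀ y : M, lamSet C α y ⊂ B →
          y ∈ {x : M | ∃ β γ : M, node C β γ ∈ A ∧ x ∈ lamSet C β γ} →
          y ∈ (p : Node C).1 :=
    fun p => key p p.2.1 p.2.2
  choose I nα nB h1 h2 h3 h4 using keyS
  have hinj : Function.Injective I := by
    intro p q hpq
    have h3q : lamSet C (nα q) (xs (I p)) ⊂ nB q := by rw [hpq]; exact h3 q
    have hm1 : xs (I p) ∈ lamSet C (nα p) (xs (I p)) := memLamRight hCs _ _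
    have hm2 : xs (I p) ∈ lamSet C (nα q) (xs (I p)) := memLamRight hCs _ _
    rcases lamNested hCs hm1 hm2 with hs | hs
    · have hαin : nα p ∈ lamSet C (nα q) (xs (I p)) := hs (memLamLeft hCs _ _)
      have hsub : lamSet C (nα q) (nα p) ⊂ nB q :=
        ssubset_of_subset_of_ssubset (lamSubset hCs (memLamLeft hCs _ _) hαin) h3q
      have hmem : nα p ∈ (q : Node C).1 := h4 q (nα p) hsub (h2 p)
      exact Subtype.ext (bothMem p.2.1 q.2.1 (nα p) (h1 p) hmem)
    · have hαin : nα q ∈ lamSet C (nα p) (xs (I p)) := hs (memLamLeft hCs _ _)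
      have hsub : lamSet C (nα p) (nα q) ⊂ nB p :=
        ssubset_of_subset_of_ssubset (lamSubset hCs (memLamLeft hCs _ _) hαin) (h3 p)
      have hmem : nα q ∈ (p : Node C).1 := h4 p (nα q) hsub (h2 q)
      exact Subtype.ext ((bothMem q.2.1 p.2.1 (nα q) (h1 q) hmem).symm)
  haveI : Finite ↥{a ∈ A | ∃ b : Node C, InfClosure C A b ∧ b < a ∧
      ¬ ∃ d : Node C, InfClosure C A d ∧ b < d ∧ d < a} := Finite.of_injective I hinj
  exact Set.toFinite _


end CMinPaper
end

section
/- Let M be a dense C-minimal C-structure such that bn(a) ≥ ℵ₀ for every a ∈ T and every branch Br(α) is densely ordered. Let A ⊆ T be an infinite antichain and let {Γ_i : i < κ} be an infinite family of pairwise distinct cones satisfying: (1) for all i < κ the basis of Γ_i is an element of A; (2) there is a positive integer N such that for every a ∈ A there are at most N cones in the family whose basis is a. Then H := ⋃{Γ_i : i < κ}, viewed as a subset of M, is not definable. -/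
namespace CMinPaper

open FirstOrder Language Structure Set

universe u v w

variable {M : Type u}

/-! ### Auxiliary lemmas for Statement 7 -/

section Aux

variable {M : Type u} {C : M → M → M → Prop}

theorem notC_left (h : IsCSet C) (α β : M) : ¬ C α α β :=
  fun hc => h.c2 _ _ _ hc hc

theorem notC_right (h : IsCSet C) (α β : M) : ¬ C β α β :=
  fun hc => notC_left h β α (h.c1 _ _ _ hc)

theorem lemT1 (h : IsCSet C) {q α β x : M} (hq : C q α β) (hx : ¬ C x α β) :
    C q x α := by
  rcases h.c3 q β α x (h.c1 _ _ _ hq) with h1 | h2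
  · exact absurd (h.c1 _ _ _ h1) hx
  · exact h2

theorem lemU (h : IsCSet C) {q α β x y : M} (hq : C q α β) (hx : ¬ C x α β)
    (hy : ¬ C y α β) : C q x y := by
  rcases h.c3 q α x y (h.c1 _ _ _ (lemT1 h hq hx)) with h1 | h2
  · rcases h.c3 q α y x (h.c1 _ _ _ (lemT1 h hq hy)) with h3 | h4
    · exact absurd (h.c1 _ _ _ h1) (h.c2 _ _ _ (h.c1 _ _ _ h3))
    · exact h4
  · exact h.c1 _ _ _ h2

theorem lemL1 (h : IsCSet C) {q α β x y p : M} (hq : C q α β) (hx : ¬ C x α β)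
    (hy : ¬ C y α β) (hxpq : C x p q) : C y p q := by
  rcases h.c3 x p q y hxpq with h1 | h2
  · exact h1
  · exact absurd (h.c1 _ _ _ h2) (h.c2 _ _ _ (lemU h hq hx hy))

theorem lemL2 (h : IsCSet C) {q α β x y p : M} (hq : C q α β) (hx : ¬ C x α β)
    (hy : ¬ C y α β) (hpxq : C p x q) : C p y q := by
  rcases h.c3 p x q y hpxq with h1 | h2
  · exact absurd (h.c1 _ _ _ h1) (h.c2 _ _ _ (h.c1 _ _ _ (lemU h hq hx hy)))
  · exact h2

theorem atom3 (h : IsCSet C) {α β x y : M} (hx : ¬ C x α β) (hy : ¬ C y α β)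
    {u0 u1 u2 v0 v1 v2 : M}
    (h0 : (u0 = x ∧ v0 = y) ∨ (u0 = v0 ∧ C u0 α β))
    (h1 : (u1 = x ∧ v1 = y) ∨ (u1 = v1 ∧ C u1 α β))
    (h2 : (u2 = x ∧ v2 = y) ∨ (u2 = v2 ∧ C u2 α β))
    (hc : C u0 u1 u2) : C v0 v1 v2 := by
  rcases h0 with ⟨rfl, rfl⟩ | ⟨rfl, hp0⟩ <;>
    rcases h1 with ⟨rfl, rfl⟩ | ⟨rfl, hp1⟩ <;>
      rcases h2 with ⟨rfl, rfl⟩ | ⟨rfl, hp2⟩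
  · exact absurd hc (h.c2 _ _ _ hc)
  · exact absurd hc (h.c2 _ _ _ hc)
  · exact absurd (h.c1 _ _ _ hc) (notC_left h _ _)
  · exact lemL1 h hp2 hx hy hc
  · exact h.c4 _ _ (fun e => hy (e ▸ hp0))
  · exact lemL2 h hp2 hx hy hc
  · exact h.c1 _ _ _ (lemL2 h hp1 hx hy (h.c1 _ _ _ hc))
  · exact hc

theorem lamSet_min (h : IsCSet C) {α' β' β γ : M} (hβ : β ∈ lamSet C α' β')
    (hγ : γ ∈ lamSet C α' β') : lamSet C β γ ⊆ lamSet C α' β' := by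
  intro w hw hc
  exact hw (lemU h hc hβ hγ)

theorem nest (h : IsCSet C) {a₁ a₂ b₁ b₂ z : M} (hza : z ∈ lamSet C a₁ a₂)
    (hzb : z ∈ lamSet C b₁ b₂) :
    lamSet C a₁ a₂ ⊆ lamSet C b₁ b₂ ∨ lamSet C b₁ b₂ ⊆ lamSet C a₁ a₂ := by
  by_contra hcon
  push_neg at hcon
  obtain ⟨u, hu1, hu2⟩ := Set.not_subset.mp hcon.1
  obtain ⟨w, hw1, hw2⟩ := Set.not_subset.mp hcon.2
  simp only [lamSet, Set.mem_setOf_eq, not_not] at *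
  have h1 : C w z u := lemU h hw2 hza hu1
  have h2 : C u z w := lemU h hu2 hzb hw1
  exact h.c2 _ _ _ (h.c1 _ _ _ h2) (h.c1 _ _ _ h1)

theorem le_iff_subset {a b : Node C} : a ≤ b ↔ b.1 ⊆ a.1 := Iff.rfl

theorem lt_iff_ssubset {a b : Node C} : a < b ↔ b.1 ⊆ a.1 ∧ ¬ a.1 ⊆ b.1 :=
  lt_iff_le_not_ge

theorem node_comm (h : IsCSet C) (α β : M) : node C α β = node C β α := by
  apply Subtype.ext
  ext w
  exact ⟨fun hw hc => hw (h.c1 _ _ _ hc), fun hw hc => hw (h.c1 _ _ _ hc)⟩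

theorem cone_trans (h : IsCSet C) {a : Node C} {α β γ : M}
    (h1 : a < node C α β) (h2 : a < node C α γ) : a < node C β γ := by
  rw [lt_iff_ssubset] at *
  by_cases hcase : C γ α β
  · have hβγ : ¬ C β α γ := fun hc =>
      h.c2 _ _ _ (h.c1 _ _ _ hcase) (h.c1 _ _ _ hc)
    have hsub : lamSet C β γ ⊆ lamSet C α γ :=
      lamSet_min h hβγ (notC_right h α γ)
    exact ⟨hsub.trans h2.1, fun hs => h2.2 (hs.trans hsub)⟩
  · have hsub : lamSet C β γ ⊆ lamSet C α β :=
      lamSet_min h (notC_right h α β) hcase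
    exact ⟨hsub.trans h1.1, fun hs => h1.2 (hs.trans hsub)⟩

theorem cone_point (h : IsCSet C) {a : Node C} {α γ : M}
    (hγ : γ ∈ coneSet C a α) : coneSet C a α = coneSet C a γ := by
  have hγ' : a < node C γ α := (node_comm h α γ) ▸ hγ
  ext δ
  exact ⟨fun hδ => cone_trans h hγ hδ, fun hδ => cone_trans h hγ' hδ⟩

theorem coneSet_subset (h : IsCSet C) {a : Node C} {α : M} :
    coneSet C a α ⊆ a.1 := by
  intro z hz
  have hle : (node C α z).1 ⊆ a.1 := (lt_iff_ssubset.mp hz).1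
  exact hle (notC_right h α z)

theorem relMap_eq (R : M → M → M → Prop) (r : cLang.Relations 3) (v : Fin 3 → M) :
    @RelMap cLang M (cStructure R) 3 r v ↔ R (v 0) (v 1) (v 2) := by
  cases r with
  | up hr => exact Iff.rfl

theorem term_eq_var {σ : Type*} (t : cLang.Term σ) :
    ∃ s, t = FirstOrder.Language.Term.var s := by
  cases t with
  | var s => exact ⟨s, rfl⟩
  | func f ts => exact Empty.elim f

theorem constancy (h : IsCSet C) {α β x y : M}
    (hx : ¬ C x α β) (hy : ¬ C y α β) {k : ℕ} (xs : Fin k → M)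
    (hxs : ∀ i, C (xs i) α β) {φ : cLang.BoundedFormula (Fin k) 1} (hφ : φ.IsQF) :
    (@BoundedFormula.Realize cLang M (cStructure C) _ _ φ xs (fun _ => x) ↔
      @BoundedFormula.Realize cLang M (cStructure C) _ _ φ xs (fun _ => y)) := by
  letI : cLang.Structure M := cStructure C
  induction hφ with
  | falsum => exact Iff.rfl
  | imp h1 h2 ih1 ih2 =>
    rw [BoundedFormula.realize_imp, BoundedFormula.realize_imp]
    exact imp_congr ih1 ih2
  | of_isAtomic hA =>
    cases hA with
    | equal t₁ t₂ =>
      obtain ⟨s₁, rfl⟩ := term_eq_var t₁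
      obtain ⟨s₂, rfl⟩ := term_eq_var t₂
      rw [BoundedFormula.realize_bdEqual, BoundedFormula.realize_bdEqual,
        Term.realize_var, Term.realize_var, Term.realize_var, Term.realize_var]
      cases s₁ with
      | inl i =>
        cases s₂ with
        | inl j => exact Iff.rfl
        | inr j =>
          simp only [Sum.elim_inl, Sum.elim_inr]
          exact iff_of_false (fun e => hx (e ▸ hxs i)) (fun e => hy (e ▸ hxs i))
      | inr i =>
        cases s₂ with
        | inl j =>
          simp only [Sum.elim_inl, Sum.elim_inr]
          exact iff_of_false (fun e => hx (e.symm ▸ hxs j))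
            (fun e => hy (e.symm ▸ hxs j))
        | inr j => simp
    | @rel l R ts =>
      have hl := R.down
      subst hl
      rw [BoundedFormula.realize_rel, BoundedFormula.realize_rel,
        relMap_eq, relMap_eq]
      have hslot : ∀ (i : Fin 3),
          ((ts i).realize (Sum.elim xs fun _ => x) = x ∧
            (ts i).realize (Sum.elim xs fun _ => y) = y) ∨
          ((ts i).realize (Sum.elim xs fun _ => x) =
            (ts i).realize (Sum.elim xs fun _ => y) ∧
            C ((ts i).realize (Sum.elim xs fun _ => x)) α β) := by
        intro i
        obtain ⟨s, hs⟩ := term_eq_var (ts i)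
        rw [hs, Term.realize_var, Term.realize_var]
        cases s with
        | inl j => exact Or.inr ⟨rfl, hxs j⟩
        | inr j => exact Or.inl ⟨rfl, rfl⟩
      constructor
      · intro hc
        exact atom3 h hx hy (hslot 0) (hslot 1) (hslot 2) hc
      · intro hc
        have hslot' : ∀ (i : Fin 3),
            ((ts i).realize (Sum.elim xs fun _ => y) = y ∧
              (ts i).realize (Sum.elim xs fun _ => x) = x) ∨
            ((ts i).realize (Sum.elim xs fun _ => y) =
              (ts i).realize (Sum.elim xs fun _ => x) ∧
              C ((ts i).realize (Sum.elim xs fun _ => y)) α β) := by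
          intro i
          rcases hslot i with ⟨h1, h2⟩ | ⟨h1, h2⟩
          · exact Or.inl ⟨h2, h1⟩
          · exact Or.inr ⟨h1.symm, h1 ▸ h2⟩
        exact atom3 h hy hx (hslot' 0) (hslot' 1) (hslot' 2) hc

end Aux

/-- The union of an infinite family of cones with bases in an infinite
antichain, boundedly many per basis, is not definable. -/
theorem statement7 {M : Type u} {L : FirstOrder.Language.{v, w}} [L.Structure M]
    (c : L.Relations 3) (C : M → M → M → Prop)
    (hC : ∀ x y z : M, C x y z ↔ RelMap c ![x, y, z])
    (hdense : IsDenseCSet C) (hmin : CMinimal L M c)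
    (hbn : BranchesInfinite C) (hbd : BranchesDense C)
    (A : Set (Node C)) (hAT : ∀ a ∈ A, ¬ IsLeaf C a)
    (hanti : IsAntichain (· ≤ ·) A) (hAinf : A.Infinite)
    (G : Set (Set M)) (hGinf : G.Infinite)
    (hbase : ∀ s ∈ G, ∃ a ∈ A, IsConeAt C a s)
    (N : ℕ) (hN : 0 < N)
    (hbound : ∀ a ∈ A, {s ∈ G | IsConeAt C a s}.Finite ∧
      {s ∈ G | IsConeAt C a s}.ncard ≤ N) :
    ¬ DefinableM L (⋃₀ G) := by
  intro hdef
  have h := hdense.toIsCSet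
  have hq := hmin M rfl (⋃₀ G) hdef
  have hRC : (fun x y z : M => RelMap c ![x, y, z]) = C := by
    funext x y z
    exact propext (hC x y z).symm
  rw [hRC] at hq
  obtain ⟨k, φ, xs, hqf, hH⟩ := hq
  set A' : Set (Node C) := {a ∈ A | ∃ s ∈ G, IsConeAt C a s} with hA'def
  have hA'sub : A' ⊆ A := fun a ha => ha.1
  have hA'inf : A'.Infinite := by
    intro hfin
    apply hGinf
    have hsub : G ⊆ ⋃ a ∈ A', {s ∈ G | IsConeAt C a s} := by
      intro s hs
      obtain ⟨a, haA, hca⟩ := hbase s hs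
      exact Set.mem_biUnion ⟨haA, s, hs, hca⟩ ⟨hs, hca⟩
    exact ((hfin.biUnion (fun a ha => (hbound a (hA'sub ha)).1))).subset hsub
  have hbadsub : ∀ i : Fin k, Set.Subsingleton {a ∈ A | xs i ∈ a.1} := by
    intro i a ha b hb
    by_contra hne
    obtain ⟨a1, a2, ha12⟩ := a.2
    obtain ⟨b1, b2, hb12⟩ := b.2
    have hz1 : xs i ∈ lamSet C a1 a2 := ha12 ▸ ha.2
    have hz2 : xs i ∈ lamSet C b1 b2 := hb12 ▸ hb.2
    rcases nest h hz1 hz2 with hs | hs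
    · exact hanti hb.1 ha.1 (Ne.symm hne)
        (by show b ≤ a; rw [le_iff_subset, ha12, hb12]; exact hs)
    · exact hanti ha.1 hb.1 hne
        (by show a ≤ b; rw [le_iff_subset, ha12, hb12]; exact hs)
  have hbadfin : (⋃ i : Fin k, {a ∈ A | xs i ∈ a.1}).Finite :=
    Set.finite_iUnion fun i => (hbadsub i).finite
  obtain ⟨a, haA', hanotbad⟩ := (hA'inf.diff hbadfin).nonempty
  obtain ⟨haA, s, hsG, hcone⟩ := haA'
  obtain ⟨α₁, hlt1, hs1⟩ := hcone
  obtain ⟨α₀, β₀, ha1⟩ := a.2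
  have hxs : ∀ i, C (xs i) α₀ β₀ := by
    intro i
    by_contra hcon
    exact hanotbad (Set.mem_iUnion.mpr ⟨i, haA, by rw [ha1]; exact hcon⟩)
  have hwcone : α₁ ∈ coneSet C a α₁ := hlt1
  have hwH : α₁ ∈ ⋃₀ G := ⟨s, hsG, hs1 ▸ hwcone⟩
  have hwa : α₁ ∈ a.1 := coneSet_subset h hwcone
  obtain ⟨s', hs'⟩ := ((hbn a (hAT a haA)).diff (hbound a haA).1).nonempty
  have hs'G : s' ∉ G := fun hg => hs'.2 ⟨hg, hs'.1⟩
  obtain ⟨α₂, hlt2, hs2⟩ := hs'.1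
  have hzcone : α₂ ∈ coneSet C a α₂ := hlt2
  have hza : α₂ ∈ a.1 := coneSet_subset h hzcone
  have hzH : α₂ ∉ ⋃₀ G := by
    rintro ⟨t, htG, hzt⟩
    obtain ⟨b, hbA, ht⟩ := hbase t htG
    obtain ⟨α₃, hlt3, ht3⟩ := ht
    by_cases hab : b = a
    · subst hab
      have h1 : t = coneSet C b α₂ := by
        rw [ht3]
        exact cone_point h (ht3 ▸ hzt)
      have h2 : s' = coneSet C b α₂ := hs2
      exact hs'G (h2 ▸ h1 ▸ htG)
    · obtain ⟨γ₀, δ₀, hb1⟩ := b.2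
      have hz1 : α₂ ∈ lamSet C α₀ β₀ := ha1 ▸ hza
      have hzb : α₂ ∈ b.1 := coneSet_subset h (ht3 ▸ hzt)
      have hz2 : α₂ ∈ lamSet C γ₀ δ₀ := hb1 ▸ hzb
      rcases nest h hz1 hz2 with hsub | hsub
      · exact hanti hbA haA hab
          (by show b ≤ a; rw [le_iff_subset, ha1, hb1]; exact hsub)
      · exact hanti haA hbA (fun e => hab e.symm)
          (by show a ≤ b; rw [le_iff_subset, ha1, hb1]; exact hsub)
  rw [hH] at hwH hzH
  have hx : ¬ C α₁ α₀ β₀ := by rw [ha1] at hwa; exact hwa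
  have hy : ¬ C α₂ α₀ β₀ := by rw [ha1] at hza; exact hza
  exact hzH ((constancy h hx hy xs hxs hqf).mp hwH)


end CMinPaper
end

section
/- Let M be a dense C-minimal C-structure such that bn(a) ≥ ℵ₀ for every a ∈ T and every branch Br(α) is densely ordered. Let A ⊆ T be an infinite antichain and let {Γ_i : i < κ} be an infinite family of pairwise distinct cones, each with basis in A, such that some positive integer N bounds the number of cones in the family with any given basis. Then for every definable subset D ⊆ M, only finitely many of the cones Γ_i intersect both D and M ∖ D. -/
namespace CMinPaper

open FirstOrder Language Structure Set

universe u v w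

variable {M : Type u}

/-! ### Auxiliary lemmas for Statement 8 -/

section Aux

variable {C : M → M → M → Prop}

lemma not_c_self (h : IsCSet C) (x z : M) : ¬ C x x z := fun hx => h.c2 _ _ _ hx hx

lemma lemB (h : IsCSet C) {t u v z : M} (h1 : C t u z) (h2 : C t v z) : C t u v := by
  rcases h.c3 t z u v (h.c1 _ _ _ h1) with h3 | h3
  · rcases h.c3 t z v u (h.c1 _ _ _ h2) with h4 | h4
    · exact absurd (h.c1 _ _ _ h3) (h.c2 _ _ _ (h.c1 _ _ _ h4))
    · exact h4
  · exact h.c1 _ _ _ h3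

lemma lemC (h : IsCSet C) {u v y z t : M} (hu : ¬ C u y z) (hv : ¬ C v y z)
    (ht : C t y z) : C t u v :=
  lemB h ((h.c3 t y z u ht).resolve_left hu) ((h.c3 t y z v ht).resolve_left hv)

lemma equidist (h : IsCSet C) {x y p q γ : M} (hx : ¬ C x p q) (hy : ¬ C y p q)
    (hγ : C γ p q) : ¬ C x y γ ∧ ¬ C y x γ := by
  have hγxy : C γ x y := lemC h hx hy hγ
  constructor
  · intro hxy; exact h.c2 _ _ _ hγxy (h.c1 _ _ _ hxy)
  · intro hyx; exact h.c2 _ _ _ (h.c1 _ _ _ hγxy) (h.c1 _ _ _ hyx)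

lemma lam_comparable (h : IsCSet C) (a b : Node C) (hne : (a.1 ∩ b.1).Nonempty) :
    a.1 ⊆ b.1 ∨ b.1 ⊆ a.1 := by
  obtain ⟨z0, hza, hzb⟩ := hne
  by_contra hcon
  push_neg at hcon
  obtain ⟨hx, hw⟩ := hcon
  obtain ⟨x, hx1, hx2⟩ := Set.not_subset.mp hx
  obtain ⟨w, hw1, hw2⟩ := Set.not_subset.mp hw
  obtain ⟨α, β, ha⟩ := a.2
  obtain ⟨γ, δ, hb⟩ := b.2
  rw [ha] at hx1 hza hw2
  rw [hb] at hx2 hzb hw1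
  have hx2' : C x γ δ := not_not.mp hx2
  have hw2' : C w α β := not_not.mp hw2
  have h1 : C x z0 w := lemC h hzb hw1 hx2'
  have h2 : C w z0 x := lemC h hza hx1 hw2'
  exact h.c2 _ _ _ (h.c1 _ _ _ h1) (h.c1 _ _ _ h2)

lemma mem_lamSet_self (h : IsCSet C) (α β : M) : β ∈ lamSet C α β := by
  intro hc
  by_cases hab : α = β
  · subst hab; exact not_c_self h α α hc
  · exact h.c2 α β β (h.c4 α β hab) hc

lemma cone_subset (h : IsCSet C) {a : Node C} {s : Set M} (hs : IsConeAt C a s) :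
    s ⊆ a.1 := by
  obtain ⟨α, -, rfl⟩ := hs
  intro β hβ
  have hle : (node C α β).1 ⊆ a.1 := hβ.le
  exact hle (mem_lamSet_self h α β)

lemma split_none {G : Set (Set M)} {D : Set M}
    (hD : ∀ s : Set M, ¬ ((s ∩ D).Nonempty ∧ (s \ D).Nonempty)) :
    {s ∈ G | (s ∩ D).Nonempty ∧ (s \ D).Nonempty}.Finite := by
  apply Set.Finite.subset Set.finite_empty
  rintro s ⟨-, hs⟩
  exact absurd hs (hD s)

lemma split_witness (h : IsCSet C) {A : Set (Node C)} (hanti : IsAntichain (· ≤ ·) A)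
    {G : Set (Set M)} (hbase : ∀ s ∈ G, ∃ a ∈ A, IsConeAt C a s)
    (hbound : ∀ a ∈ A, {s ∈ G | IsConeAt C a s}.Finite) (D : Set M) (z : M)
    (hz : ∀ s ∈ G, ∀ a ∈ A, IsConeAt C a s → (s ∩ D).Nonempty → (s \ D).Nonempty →
      z ∈ a.1) :
    {s ∈ G | (s ∩ D).Nonempty ∧ (s \ D).Nonempty}.Finite := by
  by_cases hA : ∃ a ∈ A, z ∈ a.1
  · obtain ⟨a0, ha0A, ha0z⟩ := hA
    apply (hbound a0 ha0A).subset
    rintro s ⟨hsG, h1, h2⟩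
    obtain ⟨a, haA, hcone⟩ := hbase s hsG
    have hz' := hz s hsG a haA hcone h1 h2
    have hEq : a = a0 := by
      by_contra hne
      rcases lam_comparable h a a0 ⟨z, hz', ha0z⟩ with hsub | hsub
      · exact hanti ha0A haA (fun e => hne e.symm) hsub
      · exact hanti haA ha0A hne hsub
    exact ⟨hsG, hEq ▸ hcone⟩
  · apply Set.Finite.subset Set.finite_empty
    rintro s ⟨hsG, h1, h2⟩
    obtain ⟨a, haA, hcone⟩ := hbase s hsG
    exact absurd ⟨a, haA, hz s hsG a haA hcone h1 h2⟩ hA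

lemma split_atom (h : IsCSet C) {A : Set (Node C)} (hanti : IsAntichain (· ≤ ·) A)
    {G : Set (Set M)} (hbase : ∀ s ∈ G, ∃ a ∈ A, IsConeAt C a s)
    (hbound : ∀ a ∈ A, {s ∈ G | IsConeAt C a s}.Finite)
    (e : Fin 3 → M → M)
    (he : ∀ i, (e i = fun x => x) ∨ ∃ b, e i = fun _ => b) :
    {s ∈ G | (s ∩ {x : M | C (e 0 x) (e 1 x) (e 2 x)}).Nonempty ∧
      (s \ {x : M | C (e 0 x) (e 1 x) (e 2 x)}).Nonempty}.Finite := by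
  have hmem : ∀ (a : Node C) (x : M), x ∈ a.1 → ∀ p q : M, a.1 = lamSet C p q →
      ¬ C x p q := by
    intro a x hx p q hpq
    rw [hpq] at hx
    exact hx
  rcases he 0 with h0 | ⟨b0, h0⟩ <;> rcases he 1 with h1 | ⟨b1, h1⟩ <;>
    rcases he 2 with h2 | ⟨b2, h2⟩ <;> simp only [h0, h1, h2]
  · -- (id, id, id) : C x x x, empty
    exact split_none (by rintro s ⟨⟨x, -, hx⟩, -⟩; exact not_c_self h x x hx)
  · -- (id, id, const) : C x x b2, empty
    exact split_none (by rintro s ⟨⟨x, -, hx⟩, -⟩; exact not_c_self h x b2 hx)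
  · -- (id, const, id) : C x b1 x, empty
    refine split_none ?_
    rintro s ⟨⟨x, -, hx⟩, -⟩
    exact not_c_self h x b1 (h.c1 _ _ _ hx)
  · -- (id, const, const) : C x b1 b2
    apply split_witness h hanti hbase hbound _ b2
    rintro s hsG a haA hcone ⟨x, hxs, hxD⟩ ⟨y, hys, hyD⟩
    obtain ⟨p, q, hpq⟩ := a.2
    have hx' : ¬ C x p q := hmem a x (cone_subset h hcone hxs) p q hpq
    have hy' : ¬ C y p q := hmem a y (cone_subset h hcone hys) p q hpq
    rw [hpq]
    intro hγ
    rcases h.c3 x b1 b2 y hxD with hc | hc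
    · exact hyD hc
    · exact (equidist h hx' hy' hγ).1 hc
  · -- (const, id, id) : C b0 x x
    apply split_witness h hanti hbase hbound _ b0
    rintro s hsG a haA hcone ⟨x, hxs, hxD⟩ ⟨y, hys, hyD⟩
    have hyb : y = b0 := by
      by_contra hne
      exact hyD (h.c4 b0 y (fun e => hne e.symm))
    exact hyb ▸ cone_subset h hcone hys
  · -- (const, id, const) : C b0 x b2
    apply split_witness h hanti hbase hbound _ b2
    rintro s hsG a haA hcone ⟨x, hxs, hxD⟩ ⟨y, hys, hyD⟩
    obtain ⟨p, q, hpq⟩ := a.2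
    have hx' : ¬ C x p q := hmem a x (cone_subset h hcone hxs) p q hpq
    have hy' : ¬ C y p q := hmem a y (cone_subset h hcone hys) p q hpq
    rw [hpq]
    intro hγ
    rcases h.c3 b0 x b2 y hxD with hc | hc
    · exact (equidist h hx' hy' hγ).2 hc
    · exact hyD hc
  · -- (const, const, id) : C b0 b1 x
    apply split_witness h hanti hbase hbound _ b1
    rintro s hsG a haA hcone ⟨x, hxs, hxD⟩ ⟨y, hys, hyD⟩
    obtain ⟨p, q, hpq⟩ := a.2
    have hx' : ¬ C x p q := hmem a x (cone_subset h hcone hxs) p q hpq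
    have hy' : ¬ C y p q := hmem a y (cone_subset h hcone hys) p q hpq
    rw [hpq]
    intro hγ
    have hxD' : C b0 x b1 := h.c1 _ _ _ hxD
    rcases h.c3 b0 x b1 y hxD' with hc | hc
    · exact (equidist h hx' hy' hγ).2 hc
    · exact hyD (h.c1 _ _ _ hc)
  · -- (const, const, const) : constant
    exact split_none (by rintro s ⟨⟨x, -, hx⟩, ⟨y, -, hy⟩⟩; exact hy hx)

lemma term_eq_var_s8 {α : Type*} (t : cLang.Term α) : ∃ i, t = Term.var i := by
  cases t with
  | var i => exact ⟨i, rfl⟩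
  | func f ts => exact f.elim

lemma split_finite (h : IsCSet C)
    {A : Set (Node C)} (hanti : IsAntichain (· ≤ ·) A)
    {G : Set (Set M)} (hbase : ∀ s ∈ G, ∃ a ∈ A, IsConeAt C a s)
    (hbound : ∀ a ∈ A, {s ∈ G | IsConeAt C a s}.Finite)
    {k : ℕ} (φ : cLang.BoundedFormula (Fin k) 1) (hqf : φ.IsQF) (xs : Fin k → M) :
    {s ∈ G |
      (s ∩ {x : M | @BoundedFormula.Realize cLang M (cStructure C) _ _ φ xs
        (fun _ => x)}).Nonempty ∧
      (s \ {x : M | @BoundedFormula.Realize cLang M (cStructure C) _ _ φ xs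
        (fun _ => x)}).Nonempty}.Finite := by
  letI : cLang.Structure M := cStructure C
  induction hqf with
  | falsum =>
    exact split_none (by rintro s ⟨⟨x, -, hx⟩, -⟩; exact hx)
  | of_isAtomic hatom =>
    cases hatom with
    | equal t₁ t₂ =>
      obtain ⟨v1, rfl⟩ := term_eq_var_s8 t₁
      obtain ⟨v2, rfl⟩ := term_eq_var_s8 t₂
      have hre : ∀ x : M,
          @BoundedFormula.Realize cLang M (cStructure C) _ _
            ((Term.var v1).bdEqual (Term.var v2)) xs (fun _ => x) ↔
          Sum.elim xs (fun _ => x) v1 = Sum.elim xs (fun _ => x) v2 := by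
        intro x
        rw [BoundedFormula.realize_bdEqual, Term.realize_var, Term.realize_var]
      rcases v1 with j1 | u1 <;> rcases v2 with j2 | u2
      · refine split_none ?_
        rintro s ⟨⟨x, -, hx⟩, ⟨y, -, hy⟩⟩
        exact hy ((hre y).mpr ((hre x).mp hx))
      · apply split_witness h hanti hbase hbound _ (xs j1)
        rintro s hsG a haA hcone ⟨x, hxs, hxD⟩ -
        have hx : xs j1 = x := (hre x).mp hxD
        exact hx ▸ cone_subset h hcone hxs
      · apply split_witness h hanti hbase hbound _ (xs j2)
        rintro s hsG a haA hcone ⟨x, hxs, hxD⟩ -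
        have hx : x = xs j2 := (hre x).mp hxD
        exact hx ▸ cone_subset h hcone hxs
      · exact split_none (by
          rintro s ⟨-, ⟨y, -, hy⟩⟩
          exact hy ((hre y).mpr rfl))
    | rel R ts =>
      obtain ⟨rfl⟩ := R
      choose vv hvv using fun i => term_eq_var_s8 (ts i)
      have hset : {x : M | @BoundedFormula.Realize cLang M (cStructure C) _ _
            (Relations.boundedFormula ⟨rfl⟩ ts) xs (fun _ => x)} =
          {x : M | C (Sum.elim xs (fun _ => x) (vv 0)) (Sum.elim xs (fun _ => x) (vv 1))
            (Sum.elim xs (fun _ => x) (vv 2))} := by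
        ext x
        simp only [Set.mem_setOf_eq, BoundedFormula.realize_rel, hvv, Term.realize_var]
        show RelMap _ _ ↔ _
        simp only [hvv, Term.realize_var]
        exact Iff.rfl
      rw [hset]
      apply split_atom h hanti hbase hbound
        (fun i x => Sum.elim xs (fun _ => x) (vv i))
      intro i
      rcases hi : vv i with j | u
      · right; exact ⟨xs j, by funext x; simp [hi]⟩
      · left; funext x; simp [hi]
  | imp hq1 hq2 ih1 ih2 =>
    rename_i φ₁ φ₂
    apply Set.Finite.subset (ih1.union ih2)
    rintro s ⟨hsG, ⟨x, hxs, hx⟩, ⟨y, hys, hy⟩⟩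
    rw [Set.mem_union]
    by_contra hcon
    push_neg at hcon
    obtain ⟨hn1, hn2⟩ := hcon
    set D₁ := {x : M | @BoundedFormula.Realize cLang M (cStructure C) _ _ φ₁ xs
      (fun _ => x)} with hD₁
    set D₂ := {x : M | @BoundedFormula.Realize cLang M (cStructure C) _ _ φ₂ xs
      (fun _ => x)} with hD₂
    have hs1 : ¬ ((s ∩ D₁).Nonempty ∧ (s \ D₁).Nonempty) := fun hh => hn1 ⟨hsG, hh⟩
    have hs2 : ¬ ((s ∩ D₂).Nonempty ∧ (s \ D₂).Nonempty) := fun hh => hn2 ⟨hsG, hh⟩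
    have hx' : x ∈ D₁ → x ∈ D₂ := by
      have := hx
      rw [Set.mem_setOf_eq, BoundedFormula.realize_imp] at this
      exact this
    have hy' : ¬ (y ∈ D₁ → y ∈ D₂) := by
      intro hh
      apply hy
      rw [Set.mem_setOf_eq, BoundedFormula.realize_imp]
      exact hh
    have hyD1 : y ∈ D₁ := by
      by_contra hc
      exact hy' (fun hh => absurd hh hc)
    have hyD2 : y ∉ D₂ := fun hh => hy' (fun _ => hh)
    have hsD1 : ∀ w ∈ s, w ∈ D₁ := by
      intro w hw
      by_contra hc
      exact hs1 ⟨⟨y, hys, hyD1⟩, ⟨w, hw, hc⟩⟩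
    exact hs2 ⟨⟨x, hxs, hx' (hsD1 x hxs)⟩, ⟨y, hys, hyD2⟩⟩

end Aux

/-- Given an infinite family of cones with bases in an infinite
antichain, boundedly many per basis, every definable set `D ⊆ M` splits only finitely
many of the cones. -/
theorem statement8 {M : Type u} {L : FirstOrder.Language.{v, w}} [L.Structure M]
    (c : L.Relations 3) (C : M → M → M → Prop)
    (hC : ∀ x y z : M, C x y z ↔ RelMap c ![x, y, z])
    (hdense : IsDenseCSet C) (hmin : CMinimal L M c)
    (hbn : BranchesInfinite C) (hbd : BranchesDense C)
    (A : Set (Node C)) (hAT : ∀ a ∈ A, ¬ IsLeaf C a)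
    (hanti : IsAntichain (· ≤ ·) A) (hAinf : A.Infinite)
    (G : Set (Set M)) (hGinf : G.Infinite)
    (hbase : ∀ s ∈ G, ∃ a ∈ A, IsConeAt C a s)
    (N : ℕ) (hN : 0 < N)
    (hbound : ∀ a ∈ A, {s ∈ G | IsConeAt C a s}.Finite ∧
      {s ∈ G | IsConeAt C a s}.ncard ≤ N)
    (D : Set M) (hDdef : DefinableM L D) :
    {s ∈ G | (s ∩ D).Nonempty ∧ (s \ D).Nonempty}.Finite := by
  have heq : M ≅[L] M := rfl
  obtain ⟨k, φ, xs, hqf, hDeq⟩ := hmin M heq D hDdef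
  have hRC : (fun x y z : M => RelMap c ![x, y, z]) = C := by
    funext x y z
    exact propext (hC x y z).symm
  rw [hRC] at hDeq
  rw [hDeq]
  exact split_finite hdense.toIsCSet hanti hbase (fun a ha => (hbound a ha).1) φ hqf xs

end CMinPaper
end

section
/- Let M be a dense C-minimal C-structure and let S ⊆ M be a definable set. Then there is no α ∈ M such that for infinitely many nodes a ∈ Br(α) one has both Λ_a(α) ∩ S ≠ ∅ and Λ_a(α) ∩ (M ∖ S) ≠ ∅. -/
namespace CMinPaper

open FirstOrder Language Structure Set

universe u v w

variable {M : Type u}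

/-! ### Auxiliary lemmas for Statement 19 -/

section Statement19Aux

variable {M : Type u} {C : M → M → M → Prop}

lemma IsCSet.noself (hC : IsCSet C) (x y : M) : ¬ C x x y := fun h => hC.c2 x x y h h

lemma IsCSet.noself2 (hC : IsCSet C) (x y : M) : ¬ C x y x :=
  fun h => hC.noself x y (hC.c1 x y x h)

lemma lamSet_comm (hC : IsCSet C) (a b : M) : lamSet C a b = lamSet C b a := by
  ext w
  exact ⟨fun h hc => h (hC.c1 _ _ _ hc), fun h hc => h (hC.c1 _ _ _ hc)⟩

lemma mem_lamSet_self_s19 (hC : IsCSet C) (a b : M) : b ∈ lamSet C a b := hC.noself2 b a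

/-- L3: monotonicity of `Λ`-sets. -/
lemma lam_mono (hC : IsCSet C) {x γ δ : M} (h : ¬ C x γ δ) :
    lamSet C x δ ⊆ lamSet C γ δ := by
  intro w hw hwc
  rcases hC.c3 w γ δ x hwc with h1 | h2
  · exact h h1
  · exact hw h2

lemma lam_subset_iff (hC : IsCSet C) (x γ δ : M) :
    lamSet C x δ ⊆ lamSet C γ δ ↔ ¬ C x γ δ :=
  ⟨fun h => h (hC.noself x δ : x ∈ lamSet C x δ), lam_mono hC⟩

/-- L4: if `δ` lies outside of the ball `Λ(α,x)` then `Λ(x,δ) = Λ(α,δ)`. -/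
lemma lam_out (hC : IsCSet C) {α x δ : M} (h : C δ α x) :
    lamSet C x δ = lamSet C α δ := by
  ext w
  constructor
  · intro hw hwc
    rcases hC.c3 w α δ x hwc with h1 | h2
    · exact hC.c2 x δ α (hC.c1 _ _ _ h1) (hC.c1 _ _ _ h)
    · exact hw h2
  · intro hw hwc
    rcases hC.c3 w x δ α hwc with h1 | h2
    · exact hC.c2 α δ x (hC.c1 _ _ _ h1) h
    · exact hw h2

/-- L5: if `δ` lies strictly inside the ball `Λ(α,x)` then `Λ(x,δ) = Λ(α,x)`. -/
lemma lam_in (hC : IsCSet C) {α x δ : M} (h : C x α δ) :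
    lamSet C x δ = lamSet C α x := by
  ext w
  constructor
  · intro hw hwc
    rcases hC.c3 w α x δ hwc with h1 | h2
    · exact hC.c2 x δ α (hC.c1 _ _ _ h) (hC.c1 _ _ _ h1)
    · exact hw (hC.c1 _ _ _ h2)
  · intro hw hwc
    rcases hC.c3 w δ x α (hC.c1 _ _ _ hwc) with h1 | h2
    · exact hC.c2 x α δ h (hC.c1 _ _ _ h1)
    · exact hw h2

/-- L8: if neither of `x`, `δ` is outside the ball of the other around `α`, then the
balls coincide. -/
lemma lam_eq_of_not (hC : IsCSet C) {α x δ : M} (h1 : ¬ C x α δ) (h2 : ¬ C δ α x) :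
    lamSet C α δ = lamSet C α x := by
  ext w
  constructor
  · intro hw hwc
    rcases hC.c3 w x α δ (hC.c1 _ _ _ hwc) with ha | hb
    · exact h2 (hC.c1 _ _ _ ha)
    · exact hw (hC.c1 _ _ _ hb)
  · intro hw hwc
    rcases hC.c3 w δ α x (hC.c1 _ _ _ hwc) with ha | hb
    · exact h1 (hC.c1 _ _ _ ha)
    · exact hw (hC.c1 _ _ _ hb)

/-- L1 (convexity): `Λ`-sets are convex. -/
lemma lam_convex (hC : IsCSet C) {α x γ δ : M} (hα : ¬ C α γ δ) (hx : ¬ C x γ δ) :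
    lamSet C α x ⊆ lamSet C γ δ := by
  by_cases h : C α δ x
  · calc lamSet C α x = lamSet C x α := lamSet_comm hC α x
      _ = lamSet C δ α := lam_out hC h
      _ = lamSet C α δ := lamSet_comm hC δ α
      _ ⊆ lamSet C γ δ := lam_mono hC hα
  · calc lamSet C α x ⊆ lamSet C δ x := lam_mono hC h
      _ = lamSet C x δ := lamSet_comm hC δ x
      _ ⊆ lamSet C γ δ := lam_mono hC hx

/-- Key: for `x, x'` with `Λ(α,x) = Λ(α,x')` and any `δ` with `Λ(α,δ) ≠ Λ(α,x)`,
the balls `Λ(x,δ)` and `Λ(x',δ)` coincide. -/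
lemma lam_key (hC : IsCSet C) {α x x' δ : M} (hE : lamSet C α x = lamSet C α x')
    (hG : lamSet C α δ ≠ lamSet C α x) : lamSet C x δ = lamSet C x' δ := by
  have hiff : ∀ w, C w α x ↔ C w α x' := by
    intro w
    have hmem : (¬ C w α x) ↔ (¬ C w α x') := by
      constructor
      · intro h; exact (hE ▸ (h : w ∈ lamSet C α x) : w ∈ lamSet C α x')
      · intro h; exact (hE.symm ▸ (h : w ∈ lamSet C α x') : w ∈ lamSet C α x)
    exact not_iff_not.mp hmem
  by_cases hout : C δ α x
  · have hout' : C δ α x' := (hiff δ).mp hout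
    rw [lam_out hC hout, lam_out hC hout']
  · have hout' : ¬ C δ α x' := fun h => hout ((hiff δ).mpr h)
    have hin : C x α δ := by
      by_contra hxin
      exact hG (lam_eq_of_not hC hxin hout)
    have hin' : C x' α δ := by
      by_contra hxin
      exact hG ((lam_eq_of_not hC hxin hout').trans hE.symm)
    rw [lam_in hC hin, lam_in hC hin', hE]

/-- Master transfer lemma (one direction): substituting `x'` for `x` in an atomic
`C`-statement over parameters whose balls avoid `Λ(α,x)`. -/
lemma master_mp (hC : IsCSet C) {α x x' : M} (hE : lamSet C α x = lamSet C α x')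
    {e₁ e₁' e₂ e₂' e₃ e₃' : M}
    (h₁ : x = e₁ ∧ x' = e₁' ∨ e₁ = e₁' ∧ lamSet C α e₁ ≠ lamSet C α x)
    (h₂ : x = e₂ ∧ x' = e₂' ∨ e₂ = e₂' ∧ lamSet C α e₂ ≠ lamSet C α x)
    (h₃ : x = e₃ ∧ x' = e₃' ∨ e₃ = e₃' ∧ lamSet C α e₃ ≠ lamSet C α x)
    (hc : C e₁ e₂ e₃) : C e₁' e₂' e₃' := by
  rcases h₁ with ⟨rfl, rfl⟩ | ⟨rfl, hG1⟩
  · -- first slot is the moving point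
    rcases h₂ with ⟨rfl, rfl⟩ | ⟨rfl, hG2⟩
    · exact absurd hc (hC.noself x e₃)
    · rcases h₃ with ⟨rfl, rfl⟩ | ⟨rfl, hG3⟩
      · exact absurd hc (hC.noself2 x e₂)
      · -- case (x, γ, δ)
        by_contra hn
        have hk : lamSet C x e₃ = lamSet C x' e₃ := lam_key hC hE hG3
        have hsub : lamSet C x' e₃ ⊆ lamSet C e₂ e₃ := lam_mono hC hn
        rw [← hk] at hsub
        exact (lam_subset_iff hC x e₂ e₃).mp hsub hc
  · rcases h₂ with ⟨rfl, rfl⟩ | ⟨rfl, hG2⟩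
    · rcases h₃ with ⟨rfl, rfl⟩ | ⟨rfl, hG3⟩
      · -- case (γ, x, x)
        have hne : e₁ ≠ x' := by
          intro h
          exact hG1 (by rw [h, ← hE])
        exact hC.c4 e₁ x' hne
      · -- case (γ, x, δ)
        by_contra hn
        have hk : lamSet C x e₃ = lamSet C x' e₃ := lam_key hC hE hG3
        have hmem : e₁ ∈ lamSet C x' e₃ := hn
        rw [← hk] at hmem
        exact hmem hc
    · rcases h₃ with ⟨rfl, rfl⟩ | ⟨rfl, hG3⟩
      · -- case (γ, δ, x)
        have hc' : C e₁ x e₂ := hC.c1 _ _ _ hc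
        by_contra hn
        have hn' : ¬ C e₁ x' e₂ := fun h => hn (hC.c1 _ _ _ h)
        have hk : lamSet C x e₂ = lamSet C x' e₂ := lam_key hC hE hG2
        have hmem : e₁ ∈ lamSet C x' e₂ := hn'
        rw [← hk] at hmem
        exact hmem hc'
      · exact hc

lemma master_iff (hC : IsCSet C) {α x x' : M} (hE : lamSet C α x = lamSet C α x')
    {e₁ e₁' e₂ e₂' e₃ e₃' : M}
    (h₁ : x = e₁ ∧ x' = e₁' ∨ e₁ = e₁' ∧ lamSet C α e₁ ≠ lamSet C α x)
    (h₂ : x = e₂ ∧ x' = e₂' ∨ e₂ = e₂' ∧ lamSet C α e₂ ≠ lamSet C α x)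
    (h₃ : x = e₃ ∧ x' = e₃' ∨ e₃ = e₃' ∧ lamSet C α e₃ ≠ lamSet C α x) :
    C e₁ e₂ e₃ ↔ C e₁' e₂' e₃' := by
  have sw : ∀ e e' : M,
      (x = e ∧ x' = e' ∨ e = e' ∧ lamSet C α e ≠ lamSet C α x) →
      (x' = e' ∧ x = e ∨ e' = e ∧ lamSet C α e' ≠ lamSet C α x') := by
    rintro e e' (⟨rfl, rfl⟩ | ⟨rfl, hG⟩)
    · exact Or.inl ⟨rfl, rfl⟩
    · exact Or.inr ⟨rfl, by rw [← hE]; exact hG⟩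
  exact ⟨master_mp hC hE h₁ h₂ h₃,
    master_mp hC hE.symm (sw _ _ h₁) (sw _ _ h₂) (sw _ _ h₃)⟩

lemma master_eq (hC : IsCSet C) {α x x' : M} (hE : lamSet C α x = lamSet C α x')
    {e₁ e₁' e₂ e₂' : M}
    (h₁ : x = e₁ ∧ x' = e₁' ∨ e₁ = e₁' ∧ lamSet C α e₁ ≠ lamSet C α x)
    (h₂ : x = e₂ ∧ x' = e₂' ∨ e₂ = e₂' ∧ lamSet C α e₂ ≠ lamSet C α x) :
    e₁ = e₂ ↔ e₁' = e₂' := by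
  rcases h₁ with ⟨rfl, rfl⟩ | ⟨rfl, hG1⟩
  · rcases h₂ with ⟨rfl, rfl⟩ | ⟨rfl, hG2⟩
    · simp
    · constructor
      · intro h; exact absurd (by rw [← h] : lamSet C α e₂ = lamSet C α x) hG2
      · intro h; exact absurd (by rw [← h]; exact hE.symm :
          lamSet C α e₂ = lamSet C α x) hG2
  · rcases h₂ with ⟨rfl, rfl⟩ | ⟨rfl, hG2⟩
    · constructor
      · intro h; exact absurd (by rw [h] : lamSet C α e₁ = lamSet C α x) hG1
      · intro h; exact absurd (by rw [h]; exact hE.symm :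
          lamSet C α e₁ = lamSet C α x) hG1
    · exact Iff.rfl

/-- Transfer of quantifier-free formulas between two points of the same `Λ_a(α)`. -/
lemma realize_transfer {N : Type u} {C : N → N → N → Prop} (hC : IsCSet C) {k : ℕ}
    (xs : Fin k → N) (α x x' : N)
    (hE : lamSet C α x = lamSet C α x')
    (hG : ∀ i, lamSet C α (xs i) ≠ lamSet C α x)
    (φ : cLang.BoundedFormula (Fin k) 1) (hφ : φ.IsQF) :
    (@BoundedFormula.Realize cLang N (cStructure C) _ _ φ xs (fun _ => x) ↔
     @BoundedFormula.Realize cLang N (cStructure C) _ _ φ xs (fun _ => x')) := by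
  letI : cLang.Structure N := cStructure C
  have tval : ∀ t : cLang.Term (Fin k ⊕ Fin 1),
      (∀ y : N, Term.realize (Sum.elim xs (fun _ => y)) t = y) ∨
      (∃ i, ∀ y : N, Term.realize (Sum.elim xs (fun _ => y)) t = xs i) := by
    intro t
    match t with
    | Term.var (Sum.inl i) => exact Or.inr ⟨i, fun y => rfl⟩
    | Term.var (Sum.inr j) => exact Or.inl fun y => rfl
    | Term.func f ts => exact Empty.elim f
  have tP : ∀ t : cLang.Term (Fin k ⊕ Fin 1),
      (x = Term.realize (Sum.elim xs fun _ => x) t ∧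
        x' = Term.realize (Sum.elim xs fun _ => x') t) ∨
      (Term.realize (Sum.elim xs fun _ => x) t =
          Term.realize (Sum.elim xs fun _ => x') t ∧
        lamSet C α (Term.realize (Sum.elim xs fun _ => x) t) ≠ lamSet C α x) := by
    intro t
    rcases tval t with h | ⟨i, h⟩
    · exact Or.inl ⟨(h x).symm, (h x').symm⟩
    · refine Or.inr ⟨(h x).trans (h x').symm, ?_⟩
      rw [h x]; exact hG i
  induction hφ with
  | falsum => exact Iff.rfl
  | of_isAtomic h =>
    cases h with
    | equal t₁ t₂ =>
      show (Term.realize (Sum.elim xs fun _ => x) t₁ =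
              Term.realize (Sum.elim xs fun _ => x) t₂) ↔
           (Term.realize (Sum.elim xs fun _ => x') t₁ =
              Term.realize (Sum.elim xs fun _ => x') t₂)
      exact master_eq hC hE (tP t₁) (tP t₂)
    | rel r ts =>
      obtain ⟨h⟩ := r
      subst h
      exact master_iff hC hE (tP (ts 0)) (tP (ts 1)) (tP (ts 2))
  | imp h₁ h₂ ih₁ ih₂ => exact imp_congr ih₁ ih₂

/-- Membership in `Λ_a(α)` forces `Λ(α,x) = a` (as sets). -/
lemma lam_eq_node (hC : IsCSet C) {α x : M} {a : Node C} (ha : a < leafN C α)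
    (hx : x ∈ lamMinus C a α) : lamSet C α x = a.1 := by
  obtain ⟨γ₀, δ₀, ha2⟩ := a.2
  have hle : (leafN C α).1 ⊆ a.1 := le_of_lt ha
  have hαmem : α ∈ a.1 := hle (hC.noself α α)
  have hx1s : (leafN C x).1 ⊆ a.1 := hx.1
  have hx1 : x ∈ a.1 := hx1s (hC.noself x x)
  have hsub : lamSet C α x ⊆ a.1 := by
    rw [ha2] at hαmem hx1 ⊢
    exact lam_convex hC hαmem hx1
  have hle2 : a ≤ node C α x := hsub
  have hge : node C α x ≤ a := by
    by_contra h
    exact hx.2 (lt_of_le_not_ge hle2 h)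
  exact Set.Subset.antisymm hsub hge

end Statement19Aux

/-- For a definable `S ⊆ M` there is no point `α` such that
infinitely many nodes `a` of its branch satisfy that `Λ_a(α)` meets both `S` and its
complement. -/
theorem statement19 {M : Type u} {L : FirstOrder.Language.{v, w}} [L.Structure M]
    (c : L.Relations 3) (C : M → M → M → Prop)
    (hC : ∀ x y z : M, C x y z ↔ RelMap c ![x, y, z])
    (hdense : IsDenseCSet C) (hmin : CMinimal L M c)
    (S : Set M) (hS : DefinableM L S) :
    ¬ ∃ α : M, {a : Node C | a < leafN C α ∧ (lamMinus C a α ∩ S).Nonempty ∧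
      (lamMinus C a α ∩ (Set.univ \ S)).Nonempty}.Infinite := by
  rintro ⟨α, hinf⟩
  have hCC : IsCSet C := hdense.toIsCSet
  have hCR : C = fun x y z : M => RelMap c ![x, y, z] := by
    funext x y z; exact propext (hC x y z)
  have hqf : QFCDefinable (fun x y z : M => RelMap c ![x, y, z]) S :=
    hmin M rfl S hS
  rw [← hCR] at hqf
  obtain ⟨k, φ, xs, hφ, hSet⟩ := hqf
  have hFin : (Set.range fun i : Fin k => node C α (xs i)).Finite :=
    Set.finite_range _
  obtain ⟨a, ha, haF⟩ := (hinf.diff hFin).nonempty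
  obtain ⟨halt, ⟨x, hxmem, hxS⟩, ⟨x', hx'mem, hx'S⟩⟩ := ha
  have hax : lamSet C α x = a.1 := lam_eq_node hCC halt hxmem
  have hax' : lamSet C α x' = a.1 := lam_eq_node hCC halt hx'mem
  have hE : lamSet C α x = lamSet C α x' := hax.trans hax'.symm
  have hG : ∀ i, lamSet C α (xs i) ≠ lamSet C α x := by
    intro i h
    apply haF
    refine ⟨i, ?_⟩
    apply Subtype.ext
    show lamSet C α (xs i) = a.1
    rw [h, hax]
  have htr := realize_transfer hCC xs α x x' hE hG φ hφ
  rw [hSet] at hxS hx'S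
  exact hx'S.2 (htr.mp hxS)

end CMinPaper
end
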